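/- Let n ≡ 3 mod 4 and let J₁, J₂ be the linear maps on ℝ^(n+1) defined above (J₁ pairing consecutive coordinates as (x₀,x₁)↦(−x₁,x₀), and J₂ acting on blocks of four as (x₀,x₁,x₂,x₃)↦(−x₂,x₃,x₀,−x₁)). Then for every nonzero x ∈ ℝ^(n+1) and every λ ∈ ℝ, (J₁∘J₂)(x) ≠ λ·x. -/

import Mathlib

private lemma aux_pq (p q lam : ℝ) (h1 : -q = lam * p) (h2 : p = lam * q) :
    p = 0 ∧ q = 0 := by
  have hq : q * (lam ^ 2 + 1) = 0 := by rw [h2] at h1; linear_combination -h1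
  have hq0 : q = 0 := by
    rcases mul_eq_zero.mp hq with h | h
    · exact h
    · nlinarith [sq_nonneg lam]
  exact ⟨by rw [h2, hq0, mul_zero], hq0⟩

theorem composite_involution_free (n : ℕ) (hn : n % 4 = 3)
    (J₁ J₂ : (Fin (n + 1) → ℝ) → (Fin (n + 1) → ℝ))
    (hJ₁ : ∀ (x : Fin (n + 1) → ℝ) (i : Fin (n + 1)),
      J₁ x i = if Even (i : ℕ) then -x (i + 1) else x (i - 1))
    (hJ₂ : ∀ (x : Fin (n + 1) → ℝ) (i : Fin (n + 1)),
      J₂ x i =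
        if (i : ℕ) % 4 = 0 then -x (i + 2)
        else if (i : ℕ) % 4 = 1 then x (i + 2)
        else if (i : ℕ) % 4 = 2 then x (i - 2)
        else -x (i - 2)) :
    ∀ x : Fin (n + 1) → ℝ, x ≠ 0 → ∀ lam : ℝ, J₁ (J₂ x) ≠ lam • x := by
  intro x hx lam h
  apply hx
  have hN : (n + 1) % 4 = 0 := by omega
  have key : ∀ j : Fin (n + 1), J₁ (J₂ x) j = lam * x j := by
    intro j; rw [h]; simp
  -- val of successor
  have vadd : ∀ j : Fin (n + 1), (j : ℕ) + 1 < n + 1 →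
      (((j + 1 : Fin (n + 1))) : ℕ) = (j : ℕ) + 1 := by
    intro j hj
    exact Fin.val_add_one_of_lt (by rw [Fin.lt_iff_val_lt_val, Fin.val_last]; omega)
  -- val of predecessor
  have vsub : ∀ j : Fin (n + 1), 1 ≤ (j : ℕ) →
      (((j - 1 : Fin (n + 1))) : ℕ) = (j : ℕ) - 1 := by
    intro j hj
    rw [Fin.sub_def]
    simp only [Fin.val_one']
    have hjl := j.isLt
    have h1 : 1 % (n + 1) = 1 := Nat.mod_eq_of_lt (by omega)
    rw [h1]
    have h2 : n + 1 - 1 + (j : ℕ) = ((j : ℕ) - 1) + (n + 1) := by omega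
    rw [h2, Nat.add_mod_right]
    exact Nat.mod_eq_of_lt (by omega)
  -- block claims
  have A : ∀ i : Fin (n + 1), (i : ℕ) % 4 = 0 → x i = 0 ∧ x (i + 3) = 0 := by
    intro i hi
    have hlt := i.isLt
    have v1 : ((i + 1 : Fin (n + 1)) : ℕ) = (i : ℕ) + 1 := vadd i (by omega)
    have v2 : ((i + 1 + 1 : Fin (n + 1)) : ℕ) = (i : ℕ) + 2 := by
      rw [vadd (i + 1) (by omega), v1]
    have v3 : ((i + 1 + 1 + 1 : Fin (n + 1)) : ℕ) = (i : ℕ) + 3 := by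
      rw [vadd (i + 1 + 1) (by omega), v2]
    have r3 : (i + 3 : Fin (n + 1)) = i + 1 + 1 + 1 := by open Fin.CommRing in ring
    -- equation at i
    have e1 := key i
    rw [hJ₁, if_pos (by rw [Nat.even_iff]; omega), hJ₂] at e1
    rw [if_neg (by rw [v1]; omega), if_pos (by rw [v1]; omega)] at e1
    rw [show (i + 1 + 2 : Fin (n + 1)) = i + 1 + 1 + 1 by open Fin.CommRing in ring] at e1
    -- equation at i + 3
    have e2 := key (i + 1 + 1 + 1)
    rw [hJ₁, if_neg (by rw [v3, Nat.even_iff]; omega)] at e2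
    rw [show (i + 1 + 1 + 1 - 1 : Fin (n + 1)) = i + 1 + 1 by open Fin.CommRing in ring, hJ₂] at e2
    rw [if_neg (by rw [v2]; omega), if_neg (by rw [v2]; omega),
        if_pos (by rw [v2]; omega)] at e2
    rw [show (i + 1 + 1 - 2 : Fin (n + 1)) = i by open Fin.CommRing in ring] at e2
    rw [r3]
    exact aux_pq _ _ lam e1 e2
  have B : ∀ i : Fin (n + 1), (i : ℕ) % 4 = 1 → x i = 0 ∧ x (i + 1) = 0 := by
    intro i hi
    have hlt := i.isLt
    have v1 : ((i + 1 : Fin (n + 1)) : ℕ) = (i : ℕ) + 1 := vadd i (by omega)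
    have v2 : ((i + 1 + 1 : Fin (n + 1)) : ℕ) = (i : ℕ) + 2 := by
      rw [vadd (i + 1) (by omega), v1]
    have vm : ((i - 1 : Fin (n + 1)) : ℕ) = (i : ℕ) - 1 := vsub i (by omega)
    -- equation at i
    have e1 := key i
    rw [hJ₁, if_neg (by rw [Nat.even_iff]; omega), hJ₂] at e1
    rw [if_pos (by rw [vm]; omega)] at e1
    rw [show (i - 1 + 2 : Fin (n + 1)) = i + 1 by open Fin.CommRing in ring] at e1
    -- equation at i + 1
    have e2 := key (i + 1)
    rw [hJ₁, if_pos (by rw [v1, Nat.even_iff]; omega), hJ₂] at e2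
    rw [if_neg (by rw [v2]; omega), if_neg (by rw [v2]; omega),
        if_neg (by rw [v2]; omega)] at e2
    rw [show (i + 1 + 1 - 2 : Fin (n + 1)) = i by open Fin.CommRing in ring, neg_neg] at e2
    exact aux_pq _ _ lam e1 e2
  funext i
  show x i = 0
  have hlt := i.isLt
  rcases h4 : (i : ℕ) % 4 with _ | _ | _ | _ | k
  · exact (A i h4).1
  · exact (B i h4).1
  · -- residue 2 : i = (i-1) + 1 with (i-1) of residue 1
    have vm : ((i - 1 : Fin (n + 1)) : ℕ) = (i : ℕ) - 1 := vsub i (by omega)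
    have := (B (i - 1) (by rw [vm]; omega)).2
    rwa [show (i - 1 + 1 : Fin (n + 1)) = i by open Fin.CommRing in ring] at this
  · -- residue 3
    have vm1 : ((i - 1 : Fin (n + 1)) : ℕ) = (i : ℕ) - 1 := vsub i (by omega)
    have vm2 : ((i - 1 - 1 : Fin (n + 1)) : ℕ) = (i : ℕ) - 2 := by
      rw [vsub (i - 1) (by omega), vm1]; omega
    have vm3 : ((i - 1 - 1 - 1 : Fin (n + 1)) : ℕ) = (i : ℕ) - 3 := by
      rw [vsub (i - 1 - 1) (by omega), vm2]; omega
    have := (A (i - 1 - 1 - 1) (by rw [vm3]; omega)).2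
    rwa [show (i - 1 - 1 - 1 + 3 : Fin (n + 1)) = i by open Fin.CommRing in ring] at this
  · omega
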